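/- Let (g,J) be a nilpotent Lie algebra with integrable complex structure J, let Z(g) be its centre, and set V := span{[Jz, x] : z ∈ Z(g), x ∈ g}. Then V is a J-invariant subspace of [g,g]. -/

import Mathlib

/-- For a nilpotent Lie algebra with integrable complex structure `J`, the subspace
`V = span {[Jz,x] : z central, x ∈ g}` is a `J`-invariant subspace of `[g,g]`. -/
theorem stmt_7 (g : Type*) [LieRing g] [LieAlgebra ℝ g] [LieRing.IsNilpotent g]
    (J : g →ₗ[ℝ] g) (hJ : J ∘ₗ J = -LinearMap.id)
    (hint : ∀ x y : g, ⁅x, y⁆ - ⁅J x, J y⁆ + J ⁅J x, y⁆ + J ⁅x, J y⁆ = 0) :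
    Submodule.span ℝ {v : g | ∃ z ∈ LieAlgebra.center ℝ g, ∃ x : g, v = ⁅J z, x⁆} ≤
        (LieAlgebra.derivedSeries ℝ g 1 : Submodule ℝ g) ∧
      ∀ v ∈ Submodule.span ℝ {v : g | ∃ z ∈ LieAlgebra.center ℝ g, ∃ x : g, v = ⁅J z, x⁆},
        J v ∈ Submodule.span ℝ {v : g | ∃ z ∈ LieAlgebra.center ℝ g, ∃ x : g, v = ⁅J z, x⁆} := by
  set S : Set g := {v : g | ∃ z ∈ LieAlgebra.center ℝ g, ∃ x : g, v = ⁅J z, x⁆} with hS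
  constructor
  · rw [Submodule.span_le]
    rintro v ⟨z, hz, x, rfl⟩
    show ⁅J z, x⁆ ∈ (LieAlgebra.derivedSeries ℝ g 1 : LieIdeal ℝ g)
    rw [LieAlgebra.derivedSeries_def, LieAlgebra.derivedSeriesOfIdeal_succ,
      LieAlgebra.derivedSeriesOfIdeal_zero]
    exact LieSubmodule.lie_mem_lie (LieSubmodule.mem_top _) (LieSubmodule.mem_top _)
  · intro v hv
    induction hv using Submodule.span_induction with
    | mem w hw =>
      obtain ⟨z, hz, x, rfl⟩ := hw
      have hzx : ⁅z, x⁆ = 0 := by rw [← lie_skew, hz x, neg_zero]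
      have hzJx : ⁅z, J x⁆ = 0 := by rw [← lie_skew, hz (J x), neg_zero]
      have h := hint z x
      rw [hzx, hzJx, map_zero, add_zero, zero_sub, neg_add_eq_zero] at h
      rw [← h]
      exact Submodule.subset_span ⟨z, hz, J x, rfl⟩
    | zero => simp
    | add a b _ _ ha hb => rw [map_add]; exact Submodule.add_mem _ ha hb
    | smul c a _ ha => rw [map_smul]; exact Submodule.smul_mem _ c ha
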